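/- Under the Gaussian random error model for a real interleaved GRS code of length N and dimension K, for any t ≤ N - K - 1, with probability 1 the transmitted codeword is the unique codeword within column-Hamming distance t of the received matrix; hence any decoder with the ML certificate property has probability of undetected error equal to 0. -/

import Mathlib

open MeasureTheory ProbabilityTheory Polynomial

lemma pi_ac_aux {n : ℕ} {X : Fin n → Type*}
    [∀ i, MeasurableSpace (X i)] (μ ν : ∀ i, Measure (X i))
    [∀ i, SigmaFinite (μ i)] [∀ i, SigmaFinite (ν i)]
    (h : ∀ i, μ i ≪ ν i) : Measure.pi μ ≪ Measure.pi ν := by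
  induction n with
  | zero =>
      rw [Measure.pi_of_empty μ, Measure.pi_of_empty ν]
  | succ n ih =>
      set e := MeasurableEquiv.piFinSuccAbove X 0 with he
      have h1 := MeasureTheory.measurePreserving_piFinSuccAbove μ 0
      have h2 := MeasureTheory.measurePreserving_piFinSuccAbove ν 0
      have hmain := ((h 0).prod (ih (fun i => μ ((0 : Fin (n+1)).succAbove i))
        (fun i => ν ((0 : Fin (n+1)).succAbove i)) (fun i => h _))).map
        (f := e.symm) e.symm.measurable
      rwa [(h1.symm e).map_eq, (h2.symm e).map_eq] at hmain

lemma null_of_interp {N K L t : ℕ} (l0 : Fin L) (α : Fin N → ℝ)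
    (hα : Function.Injective α) (w : Fin t → ℝ) (c : Fin t → ℝ)
    (Z : Finset (Fin N)) (A : Finset (Fin t))
    (hZK : Z.card ≤ K) (hcard : K + 1 ≤ A.card + Z.card) :
    Measure.pi (fun _ : Fin t => Measure.pi fun _ : Fin L => gaussianReal 0 1)
      {e : Fin t → Fin L → ℝ | ∃ p : ℝ[X], p.degree < (K : ℕ) ∧
        (∀ i ∈ Z, p.eval (α i) = 0) ∧ ∀ k ∈ A, e k l0 = c k * p.eval (w k)} = 0 := by
  classical
  set T := Polynomial.degreeLT ℝ K with hT
  set Ev : T →ₗ[ℝ] (↥Z → ℝ) :=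
    LinearMap.pi (fun z : Z => (Polynomial.leval (α z.1)).comp T.subtype) with hEvdef
  have hEv : Function.Surjective Ev := by
    intro f
    set g : Fin N → ℝ := fun i => if h : i ∈ Z then f ⟨i, h⟩ else 0 with hg
    have hdeg : Lagrange.interpolate Z α g ∈ T := by
      rw [hT, Polynomial.mem_degreeLT]
      refine lt_of_lt_of_le (Lagrange.degree_interpolate_lt _ (hα.injOn)) ?_
      exact_mod_cast hZK
    refine ⟨⟨Lagrange.interpolate Z α g, hdeg⟩, ?_⟩
    funext z
    show Polynomial.eval (α z.1) (Lagrange.interpolate Z α g) = f z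
    rw [Lagrange.eval_interpolate_at_node _ (hα.injOn) z.2]
    simp [hg]
  haveI hTfin : Module.Finite ℝ T := Module.Finite.equiv (Polynomial.degreeLTEquiv ℝ K).symm
  have hkerEv : Module.finrank ℝ (LinearMap.ker Ev) = K - Z.card := by
    have h1 := LinearMap.finrank_range_add_finrank_ker Ev
    rw [LinearMap.range_eq_top.2 hEv, finrank_top] at h1
    have hTr : Module.finrank ℝ T = K := by
      rw [(Polynomial.degreeLTEquiv ℝ K).finrank_eq, Module.finrank_pi, Fintype.card_fin]
    have hZr : Module.finrank ℝ (↥Z → ℝ) = Z.card := by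
      rw [Module.finrank_pi, Fintype.card_coe]
    omega
  set GA : T →ₗ[ℝ] (↥A → ℝ) :=
    (LinearMap.pi fun k : A => c k.1 • Polynomial.leval (w k.1)).comp T.subtype with hGA
  set W : Submodule ℝ (↥A → ℝ) := (LinearMap.ker Ev).map GA with hWdef
  have hW : W ≠ ⊤ := by
    intro hWtop
    have h2 : Module.finrank ℝ W ≤ K - Z.card :=
      le_trans (Submodule.finrank_map_le _ _) hkerEv.le
    rw [hWtop, finrank_top, Module.finrank_pi, Fintype.card_coe] at h2
    omega
  set π : (Fin t → Fin L → ℝ) →ₗ[ℝ] (↥A → ℝ) :=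
    LinearMap.pi (fun k : A => (LinearMap.proj (R := ℝ) (φ := fun _ : Fin L => ℝ) l0).comp (LinearMap.proj (R := ℝ) (φ := fun _ : Fin t => Fin L → ℝ) (k : Fin t))) with hπ
  have hπs : Function.Surjective π := by
    intro u
    refine ⟨fun k l => if h : k ∈ A ∧ l = l0 then u ⟨k, h.1⟩ else 0, ?_⟩
    funext k
    show (if h : (k : Fin t) ∈ A ∧ l0 = l0 then u ⟨k, h.1⟩ else 0) = u k
    rw [dif_pos ⟨k.2, rfl⟩]
  set V : Submodule ℝ (Fin t → Fin L → ℝ) := W.comap π with hV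
  have hVne : V ≠ ⊤ := by
    intro hVtop
    obtain ⟨u, hu⟩ : ∃ u, u ∉ W := by
      by_contra hcon; push_neg at hcon; exact hW (Submodule.eq_top_iff'.2 hcon)
    obtain ⟨e0, he0⟩ := hπs u
    have hmem : e0 ∈ V := hVtop ▸ Submodule.mem_top
    exact hu (he0 ▸ hmem)
  have hsub : {e : Fin t → Fin L → ℝ | ∃ p : ℝ[X], p.degree < (K : ℕ) ∧
      (∀ i ∈ Z, p.eval (α i) = 0) ∧ ∀ k ∈ A, e k l0 = c k * p.eval (w k)} ⊆ (V : Set _) := by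
    rintro e ⟨p, hpdeg, hpZ, hpA⟩
    have hpT : p ∈ T := Polynomial.mem_degreeLT.2 hpdeg
    refine Submodule.mem_comap.2 (Submodule.mem_map.2 ⟨⟨p, hpT⟩, ?_, ?_⟩)
    · rw [LinearMap.mem_ker]
      funext z
      exact hpZ z.1 z.2
    · funext k
      show c k.1 * p.eval (w k.1) = e (k : Fin t) l0
      exact (hpA k.1 k.2).symm
  refine measure_mono_null hsub ?_
  have hac : Measure.pi (fun _ : Fin t => Measure.pi fun _ : Fin L => gaussianReal 0 1)
      ≪ (volume : Measure (Fin t → Fin L → ℝ)) := by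
    rw [volume_pi]
    refine pi_ac_aux _ _ fun _ => ?_
    rw [volume_pi]
    exact pi_ac_aux _ _ fun _ => gaussianReal_absolutelyContinuous 0 one_ne_zero
  exact hac (Measure.addHaar_submodule volume V hVne)

/-- Under the Gaussian random error model for a real interleaved GRS code, for
t ≤ N-K-1 errors, with probability 1 the transmitted codeword is the unique codeword
within column-Hamming distance t of the received matrix. -/
theorem real_IRS_unique_closest_codeword_as (N K L t : ℕ) (hK : K < N)
    (ht : t ≤ N - K - 1) (hL : 1 ≤ L)
    (α : Fin N → ℝ) (hα : Function.Injective α)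
    (v : Fin N → ℝ) (hv : ∀ i, v i ≠ 0)
    (C : Set (Matrix (Fin L) (Fin N) ℝ))
    (hC : C = {D | ∀ l, ∃ p : ℝ[X], p.degree < (K : ℕ) ∧
      ∀ i, D l i = v i * p.eval (α i)})
    (j : Fin t → Fin N) (hj : Function.Injective j)
    (D : Matrix (Fin L) (Fin N) ℝ) (hD : D ∈ C) :
    Measure.pi (fun _ : Fin t => Measure.pi fun _ : Fin L => gaussianReal 0 1)
      {e : Fin t → Fin L → ℝ |
        ∃ D' ∈ C, D' ≠ D ∧
          {i : Fin N | ∃ l, (D l i + ∑ k, if j k = i then e k l else 0) ≠ D' l i}.ncard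
            ≤ t} = 0 := by
  classical
  set l0 : Fin L := ⟨0, hL⟩ with hl0
  rw [hC] at hD
  choose p hpdeg hpev using hD
  apply measure_mono_null (?_ :
    _ ⊆ ⋃ (Z : Finset (Fin N)) (A : Finset (Fin t))
        (_ : Z.card ≤ K ∧ K + 1 ≤ A.card + Z.card),
      {e : Fin t → Fin L → ℝ | ∃ q : ℝ[X], q.degree < (K : ℕ) ∧
        (∀ i ∈ Z, q.eval (α i) = 0) ∧ ∀ k ∈ A, e k l0 = v (j k) * q.eval (α (j k))})
  · refine measure_iUnion_null fun Z => measure_iUnion_null fun A =>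
      measure_iUnion_null fun hZA => ?_
    exact null_of_interp l0 α hα (fun k => α (j k)) (fun k => v (j k)) Z A hZA.1 hZA.2
  · -- containment
    intro e he
    simp only [Set.mem_setOf_eq] at he
    obtain ⟨D', hD'C, hne, hdist⟩ := he
    rw [hC, Set.mem_setOf_eq] at hD'C
    choose p' hp'deg hp'ev using hD'C
    set q : Fin L → ℝ[X] := fun l => p' l - p l with hqdef
    have hqdeg : ∀ l, (q l).degree < (K : ℕ) := fun l =>
      lt_of_le_of_lt (Polynomial.degree_sub_le _ _) (max_lt (hp'deg l) (hpdeg l))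
    have hqev : ∀ l i, D' l i - D l i = v i * (q l).eval (α i) := by
      intro l i
      rw [hp'ev l i, hpev l i, hqdef]
      simp only [Polynomial.eval_sub]
      ring
    set R : Fin L → Fin N → ℝ := fun l i => D l i + ∑ k, if j k = i then e k l else 0 with hR
    have hdist' : {i : Fin N | ∃ l, R l i ≠ D' l i}.ncard ≤ t := hdist
    set J : Finset (Fin N) := Finset.univ.image j with hJ
    have hRout : ∀ i, i ∉ J → ∀ l, R l i = D l i := by
      intro i hi l
      have hz : ∀ k : Fin t, (if j k = i then e k l else 0) = 0 := by
        intro k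
        rw [if_neg]
        intro h
        exact hi (Finset.mem_image.2 ⟨k, Finset.mem_univ k, h⟩)
      rw [hR]
      simp only
      rw [Finset.sum_congr rfl (fun k _ => hz k), Finset.sum_const_zero, add_zero]
    have hRj : ∀ k l, R l (j k) = D l (j k) + e k l := by
      intro k l
      rw [hR]
      simp only
      congr 1
      have hcong : ∀ k' : Fin t, (if j k' = j k then e k' l else 0)
          = if k' = k then e k' l else 0 := fun k' => by simp [hj.eq_iff]
      rw [Finset.sum_congr rfl fun k' _ => hcong k',
        Finset.sum_ite_eq' Finset.univ k (fun k' => e k' l), if_pos (Finset.mem_univ k)]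
    have hJcard : J.card = t := by
      rw [hJ, Finset.card_image_of_injective _ hj, Finset.card_univ, Fintype.card_fin]
    set Ufin : Finset (Fin N) := Finset.univ.filter (fun i => ∃ l, R l i ≠ D' l i) with hU
    have hUcard : Ufin.card ≤ t := by
      have hset : {i : Fin N | ∃ l, R l i ≠ D' l i} = ↑Ufin := by
        ext i; simp [hU]
      calc Ufin.card = (↑Ufin : Set (Fin N)).ncard := (Set.ncard_coe_finset _).symm
        _ ≤ t := hset ▸ hdist'
    set suppD : Finset (Fin N) := Finset.univ.filter (fun i => ∃ l, D' l i ≠ D l i) with hsupp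
    obtain ⟨l1, i1, hli⟩ : ∃ l i, D' l i ≠ D l i := by
      by_contra hcon
      push_neg at hcon
      exact hne (by funext l i; exact hcon l i)
    have hq1 : q l1 ≠ 0 := by
      intro h0
      apply hli
      have h2 := hqev l1 i1
      rw [h0] at h2
      simp at h2
      linarith
    have hroots : (Finset.univ.filter (fun i : Fin N => (q l1).eval (α i) = 0)).card < K := by
      have h1 : (Finset.univ.filter (fun i : Fin N => (q l1).eval (α i) = 0)).card
          ≤ (q l1).natDegree := by
        have hmapsto : ∀ i ∈ Finset.univ.filter (fun i : Fin N => (q l1).eval (α i) = 0),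
            α i ∈ (q l1).roots.toFinset := by
          intro i hi
          rw [Multiset.mem_toFinset, Polynomial.mem_roots hq1]
          exact (Finset.mem_filter.1 hi).2
        calc (Finset.univ.filter (fun i : Fin N => (q l1).eval (α i) = 0)).card
            ≤ (q l1).roots.toFinset.card :=
              Finset.card_le_card_of_injOn α hmapsto (hα.injOn)
          _ ≤ Multiset.card (q l1).roots := (q l1).roots.toFinset_card_le
          _ ≤ (q l1).natDegree := Polynomial.card_roots' _
      exact lt_of_le_of_lt h1 ((Polynomial.natDegree_lt_iff_degree_lt hq1).2 (hqdeg l1))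
    have hsuppcompl : Finset.univ \ suppD
        ⊆ Finset.univ.filter (fun i : Fin N => (q l1).eval (α i) = 0) := by
      intro i hi
      rw [Finset.mem_sdiff] at hi
      have heq : D' l1 i = D l1 i := by
        by_contra hc
        exact hi.2 (Finset.mem_filter.2 ⟨Finset.mem_univ _, l1, hc⟩)
      have h2 := hqev l1 i
      rw [heq, sub_self] at h2
      rcases mul_eq_zero.1 h2.symm with h | h
      · exact absurd h (hv i)
      · exact Finset.mem_filter.2 ⟨Finset.mem_univ _, h⟩
    have hsuppcard : N - suppD.card < K := by
      have h1 : (Finset.univ \ suppD).card = N - suppD.card := by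
        rw [Finset.card_sdiff_of_subset (Finset.subset_univ _), Finset.card_univ, Fintype.card_fin]
      have h2 := Finset.card_le_card hsuppcompl
      omega
    have hsuppN : suppD.card ≤ N := by
      calc suppD.card ≤ Finset.univ.card := Finset.card_le_card (Finset.subset_univ _)
        _ = N := by rw [Finset.card_univ, Fintype.card_fin]
    set S : Finset (Fin N) := suppD \ J with hS
    have hSU : S ⊆ Ufin \ J := by
      intro i hi
      rw [hS, Finset.mem_sdiff] at hi
      rw [Finset.mem_sdiff]
      refine ⟨?_, hi.2⟩
      obtain ⟨l, hl⟩ := (Finset.mem_filter.1 hi.1).2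
      rw [hU, Finset.mem_filter]
      refine ⟨Finset.mem_univ _, l, ?_⟩
      rw [hRout i hi.2 l]
      exact fun h => hl h.symm
    have hS1 : 1 ≤ S.card := by
      by_contra hcon
      push_neg at hcon
      have hSe : S = ∅ := Finset.card_eq_zero.1 (by omega)
      have hsubJ : suppD ⊆ J := by
        intro i hi
        by_contra hij
        have : i ∈ S := by rw [hS, Finset.mem_sdiff]; exact ⟨hi, hij⟩
        rw [hSe] at this
        exact absurd this (Finset.notMem_empty _)
      have h2 : suppD.card ≤ t := hJcard ▸ Finset.card_le_card hsubJ
      omega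
    set A : Finset (Fin t) := Finset.univ.filter (fun k => ∀ l, R l (j k) = D' l (j k)) with hA
    have hAcard : S.card ≤ A.card := by
      have hB : A.card
          + (Finset.univ.filter (fun k : Fin t => ¬ ∀ l, R l (j k) = D' l (j k))).card = t := by
        rw [hA, Finset.card_filter_add_card_filter_not, Finset.card_univ,
          Fintype.card_fin]
      have hBle : (Finset.univ.filter (fun k : Fin t => ¬ ∀ l, R l (j k) = D' l (j k))).card
          ≤ (Ufin ∩ J).card := by
        apply Finset.card_le_card_of_injOn j
        · intro k hk
          rw [Finset.mem_coe, Finset.mem_filter] at hk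
          have hk2 := hk.2
          push_neg at hk2
          obtain ⟨l, hl⟩ := hk2
          rw [Finset.mem_coe, Finset.mem_inter]
          exact ⟨Finset.mem_filter.2 ⟨Finset.mem_univ _, l, hl⟩,
            Finset.mem_image.2 ⟨k, Finset.mem_univ k, rfl⟩⟩
        · exact hj.injOn
      have hUsplit : (Ufin ∩ J).card + (Ufin \ J).card = Ufin.card :=
        Finset.card_inter_add_card_sdiff _ _
      have hSle : S.card ≤ (Ufin \ J).card := Finset.card_le_card hSU
      omega
    set Z0 : Finset (Fin N) := (Finset.univ \ J) \ suppD with hZ0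
    have hZ0card : Z0.card + S.card = N - t := by
      have h1 : Z0 = (Finset.univ \ J) \ S := by
        ext i
        simp only [hZ0, hS, Finset.mem_sdiff, Finset.mem_univ, true_and]
        tauto
      have h2 : S ⊆ Finset.univ \ J := by
        intro i hi
        rw [hS, Finset.mem_sdiff] at hi
        rw [Finset.mem_sdiff]
        exact ⟨Finset.mem_univ _, hi.2⟩
      have h3 : (Finset.univ \ J).card = N - t := by
        rw [Finset.card_sdiff_of_subset (Finset.subset_univ _), Finset.card_univ, Fintype.card_fin, hJcard]
      rw [h1, ← h3]
      exact Finset.card_sdiff_add_card_eq_card h2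
    have hZ0vanish : ∀ i ∈ Z0, ∀ l, (q l).eval (α i) = 0 := by
      intro i hi l
      rw [hZ0, Finset.mem_sdiff] at hi
      have heq : D' l i = D l i := by
        by_contra hc
        exact hi.2 (Finset.mem_filter.2 ⟨Finset.mem_univ _, l, hc⟩)
      have h2 := hqev l i
      rw [heq, sub_self] at h2
      rcases mul_eq_zero.1 h2.symm with h | h
      · exact absurd h (hv i)
      · exact h
    obtain ⟨Z, hZsub, hZcard⟩ := Finset.exists_subset_card_eq (min_le_left Z0.card K)
    have hN : K + 1 + t ≤ N := by omega
    refine Set.mem_iUnion.2 ⟨Z, Set.mem_iUnion.2 ⟨A, Set.mem_iUnion.2 ⟨⟨?_, ?_⟩, ?_⟩⟩⟩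
    · rw [hZcard]; exact min_le_right _ _
    · omega
    · refine ⟨q l0, hqdeg l0, fun i hi => hZ0vanish i (hZsub hi) l0, ?_⟩
      intro k hk
      rw [hA, Finset.mem_filter] at hk
      have h1 := hk.2 l0
      have h2 := hRj k l0
      have h3 := hqev l0 (j k)
      linarith
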